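/- Let k be a field and let A = k[ε]/(ε²) be the algebra of dual numbers over k. Then the trivial extension algebra T A = A ⊕ Hom_k(A,k) is isomorphic as a k-algebra to A ⊗_k A. -/

import Mathlib

/-! The `A`-bimodule structure on the `k`-linear dual `Hom_k(A, k)` of a `k`-algebra `A`,
given by `(a · f · b) (x) = f (b * x * a)`, and the resulting trivial extension algebra
`T A = TrivSqZeroExt A (Module.Dual k A)`. -/

section DualBimodule

variable {k A : Type*} [CommSemiring k] [Semiring A] [Algebra k A]

noncomputable instance Module.Dual.leftAlgebraSMul : SMul A (Module.Dual k A) :=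
  ⟨fun a f => f ∘ₗ LinearMap.mulRight k a⟩

noncomputable instance Module.Dual.rightAlgebraSMul : SMul Aᵐᵒᵖ (Module.Dual k A) :=
  ⟨fun b f => f ∘ₗ LinearMap.mulLeft k b.unop⟩

@[simp] theorem Module.Dual.leftAlgebraSMul_apply (a : A) (f : Module.Dual k A) (x : A) :
    (a • f) x = f (x * a) := rfl

@[simp] theorem Module.Dual.rightAlgebraSMul_apply (b : Aᵐᵒᵖ) (f : Module.Dual k A) (x : A) :
    (b • f) x = f (b.unop * x) := rfl

noncomputable instance Module.Dual.leftAlgebraModule : Module A (Module.Dual k A) where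
  one_smul f := LinearMap.ext fun x => by simp
  mul_smul a b f := LinearMap.ext fun x => by simp [mul_assoc]
  smul_zero a := LinearMap.ext fun x => rfl
  smul_add a f g := LinearMap.ext fun x => rfl
  add_smul a b f := LinearMap.ext fun x => by simp [mul_add]
  zero_smul f := LinearMap.ext fun x => by simp

noncomputable instance Module.Dual.rightAlgebraModule : Module Aᵐᵒᵖ (Module.Dual k A) where
  one_smul f := LinearMap.ext fun x => by simp
  mul_smul a b f := LinearMap.ext fun x => by simp [mul_assoc]
  smul_zero a := LinearMap.ext fun x => rfl
  smul_add a f g := LinearMap.ext fun x => rfl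
  add_smul a b f := LinearMap.ext fun x => by simp [add_mul]
  zero_smul f := LinearMap.ext fun x => by simp

instance : SMulCommClass A Aᵐᵒᵖ (Module.Dual k A) :=
  ⟨fun a b f => LinearMap.ext fun x => by simp [mul_assoc]⟩

instance : IsScalarTower k A (Module.Dual k A) :=
  ⟨fun c a f => LinearMap.ext fun x => by
    simp only [Module.Dual.leftAlgebraSMul_apply, LinearMap.smul_apply, smul_eq_mul,
      mul_smul_comm, map_smul]⟩

instance : IsScalarTower k Aᵐᵒᵖ (Module.Dual k A) :=
  ⟨fun c b f => LinearMap.ext fun x => by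
    simp only [Module.Dual.rightAlgebraSMul_apply, LinearMap.smul_apply, smul_eq_mul,
      MulOpposite.unop_smul, smul_mul_assoc, map_smul]⟩

end DualBimodule

/-- The trivial extension `T A = A ⊕ Hom_k(A,k)` of `A` by its `k`-linear dual, with
multiplication `(a, f) · (b, g) = (a b, a · g + f · b)`. -/
noncomputable abbrev TrivExt (k A : Type*) [CommSemiring k] [Semiring A] [Algebra k A] :=
  TrivSqZeroExt A (Module.Dual k A)

open scoped TensorProduct


section Aux
open TrivSqZeroExt DualNumber Algebra.TensorProduct
variable {k : Type} [Field k]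

theorem dn_decomp (a : DualNumber k) : a = a.fst • 1 + a.snd • ε := by
  rw [← inl_fst_add_inr_snd_eq a]
  congr 1
  · simp [Algebra.algebraMap_eq_smul_one, ← algebraMap_eq_inl]
  · rw [show (ε : DualNumber k) = inr 1 from rfl, ← inr_smul]
    simp

theorem dn_dual_apply (f : Module.Dual k (DualNumber k)) (a : DualNumber k) :
    f a = a.fst * f 1 + a.snd * f ε := by
  conv_lhs => rw [dn_decomp a]
  simp

theorem dn_eps_mul (a : DualNumber k) : ε * a = a.fst • ε := by
  conv_lhs => rw [dn_decomp a]
  simp [mul_add, mul_smul_comm, eps_mul_eps]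

theorem dn_mul_eps (a : DualNumber k) : a * ε = a.fst • ε := by
  rw [mul_comm, dn_eps_mul]

theorem dn_tmul_eps (a : DualNumber k) :
    (a ⊗ₜ[k] (ε : DualNumber k)) =
      a.fst • ((1 : DualNumber k) ⊗ₜ[k] (ε : DualNumber k)) +
        a.snd • ((ε : DualNumber k) ⊗ₜ[k] (ε : DualNumber k)) := by
  conv_lhs => rw [dn_decomp a]
  simp [TensorProduct.add_tmul, TensorProduct.smul_tmul']

theorem dual_smul_op_smul (a : DualNumber k) (f : Module.Dual k (DualNumber k)) :
    a • f = MulOpposite.op a • f :=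
  LinearMap.ext fun x => by simp [mul_comm]

theorem trivExt_mul_comm (x y : TrivExt k (DualNumber k)) : x * y = y * x :=
  TrivSqZeroExt.ext (mul_comm _ _) (by
    rw [TrivSqZeroExt.snd_mul, TrivSqZeroExt.snd_mul, dual_smul_op_smul,
      dual_smul_op_smul (TrivSqZeroExt.fst y), add_comm])

/-- The linear map sending `f` to `f 1 • ε⊗ε + f ε • 1⊗ε`. -/
noncomputable def gmap (k : Type) [Field k] :
    Module.Dual k (DualNumber k) →ₗ[k] (DualNumber k ⊗[k] DualNumber k) where
  toFun f := f 1 • ((ε : DualNumber k) ⊗ₜ[k] (ε : DualNumber k)) +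
    f ε • ((1 : DualNumber k) ⊗ₜ[k] (ε : DualNumber k))
  map_add' f g := by simp only [LinearMap.add_apply, add_smul]; abel
  map_smul' c f := by simp [smul_smul, smul_add]

theorem gmap_apply (f : Module.Dual k (DualNumber k)) :
    gmap k f = f 1 • ((ε : DualNumber k) ⊗ₜ[k] (ε : DualNumber k)) +
      f ε • ((1 : DualNumber k) ⊗ₜ[k] (ε : DualNumber k)) := rfl

theorem gmap_mul_gmap (x y : Module.Dual k (DualNumber k)) : gmap k x * gmap k y = 0 := by
  have : LeftDistribClass (DualNumber k ⊗[k] DualNumber k) := Distrib.leftDistribClass (DualNumber k ⊗[k] DualNumber k)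
  have : RightDistribClass (DualNumber k ⊗[k] DualNumber k) := Distrib.rightDistribClass (DualNumber k ⊗[k] DualNumber k)
  simp [gmap_apply, mul_add, add_mul, smul_mul_assoc, mul_smul_comm,
    Algebra.TensorProduct.tmul_mul_tmul, eps_mul_eps]

theorem gmap_smul (a : DualNumber k) (x : Module.Dual k (DualNumber k)) :
    gmap k (a • x) = (includeLeft : DualNumber k →ₐ[k] _) a * gmap k x := by
  rw [gmap_apply, Module.Dual.leftAlgebraSMul_apply, Module.Dual.leftAlgebraSMul_apply,
    one_mul, dn_dual_apply x a, dn_eps_mul, map_smul, includeLeft_apply, gmap_apply,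
    mul_add, mul_smul_comm, mul_smul_comm, Algebra.TensorProduct.tmul_mul_tmul,
    Algebra.TensorProduct.tmul_mul_tmul, dn_mul_eps, mul_one, one_mul, dn_tmul_eps a]
  simp only [TensorProduct.smul_tmul', smul_eq_mul, smul_smul, smul_add, add_smul,
    ← TensorProduct.smul_tmul']
  module

theorem gmap_op_smul (a : DualNumber k) (x : Module.Dual k (DualNumber k)) :
    gmap k (MulOpposite.op a • x) = gmap k x * (includeLeft : DualNumber k →ₐ[k] _) a := by
  rw [← dual_smul_op_smul, gmap_smul]; exact mul_comm ((includeLeft : DualNumber k →ₐ[k] DualNumber k ⊗[k] DualNumber k) a) (gmap k x)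

/-- The algebra map `T A →ₐ[k] A ⊗ A`. -/
noncomputable def phi (k : Type) [Field k] :
    TrivExt k (DualNumber k) →ₐ[k] (DualNumber k ⊗[k] DualNumber k) :=
  TrivSqZeroExt.lift includeLeft (gmap k) gmap_mul_gmap gmap_smul gmap_op_smul

/-- The functional `x ↦ x.snd` on dual numbers. -/
noncomputable def epsStar (k : Type) [Field k] : Module.Dual k (DualNumber k) :=
  TrivSqZeroExt.sndHom k k

@[simp] theorem epsStar_apply (x : DualNumber k) : epsStar k x = TrivSqZeroExt.snd x := rfl

/-- The algebra map `A →ₐ[k] T A` sending `ε` to `inr ε*`. -/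
noncomputable def psi2 (k : Type) [Field k] : DualNumber k →ₐ[k] TrivExt k (DualNumber k) :=
  DualNumber.lift ⟨(Algebra.ofId k _, TrivSqZeroExt.inr (epsStar k)),
    TrivSqZeroExt.inr_mul_inr _ _ _, fun a => (Algebra.commutes a _).symm⟩

theorem psi2_eps : psi2 k ε = TrivSqZeroExt.inr (epsStar k) := DualNumber.lift_apply_eps _

/-- The algebra map `A ⊗ A →ₐ[k] T A`. -/
noncomputable def psi (k : Type) [Field k] :
    (DualNumber k ⊗[k] DualNumber k) →ₐ[k] TrivExt k (DualNumber k) :=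
  Algebra.TensorProduct.lift (TrivSqZeroExt.inlAlgHom k _ _) (psi2 k)
    (fun _ _ => show Commute _ _ from (trivExt_mul_comm _ _))

end Aux

open TrivSqZeroExt DualNumber in
set_option maxHeartbeats 1000000 in
set_option synthInstance.maxHeartbeats 400000 in
/-- For the algebra `A = k[ε]/(ε²)` of dual numbers over a field `k`, the trivial
extension algebra `T A = A ⊕ Hom_k(A,k)` is isomorphic, as a `k`-algebra, to
`A ⊗_k A`. -/
theorem trivExt_dualNumber_iso_tensor (k : Type) [Field k] :
    Nonempty (TrivExt k (DualNumber k) ≃ₐ[k] (DualNumber k ⊗[k] DualNumber k)) := by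
  classical
  refine ⟨AlgEquiv.ofAlgHom (phi k) (psi k) ?_ ?_⟩
  · apply Algebra.TensorProduct.ext
    · apply DualNumber.algHom_ext
      show phi k (psi k ((ε : DualNumber k) ⊗ₜ[k] 1)) = (ε : DualNumber k) ⊗ₜ[k] 1
      rw [psi, Algebra.TensorProduct.lift_tmul, map_one, mul_one,
        TrivSqZeroExt.inlAlgHom_apply, phi, TrivSqZeroExt.lift_apply_inl,
        Algebra.TensorProduct.includeLeft_apply]
    · apply DualNumber.algHom_ext
      show phi k (psi k ((1 : DualNumber k) ⊗ₜ[k] (ε : DualNumber k))) =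
        (1 : DualNumber k) ⊗ₜ[k] (ε : DualNumber k)
      rw [psi, Algebra.TensorProduct.lift_tmul, map_one, one_mul, psi2_eps,
        phi, TrivSqZeroExt.lift_apply_inr, gmap_apply]
      simp
  · apply TrivSqZeroExt.algHom_ext'
    · apply DualNumber.algHom_ext
      show psi k (phi k (TrivSqZeroExt.inl (ε : DualNumber k))) = TrivSqZeroExt.inl ε
      rw [phi, TrivSqZeroExt.lift_apply_inl, Algebra.TensorProduct.includeLeft_apply,
        psi, Algebra.TensorProduct.lift_tmul, map_one, mul_one, TrivSqZeroExt.inlAlgHom_apply]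
    · apply LinearMap.ext
      intro f
      show psi k (phi k (TrivSqZeroExt.inr f)) = TrivSqZeroExt.inr f
      rw [phi, TrivSqZeroExt.lift_apply_inr, gmap_apply, map_add, map_smul, map_smul,
        psi, Algebra.TensorProduct.lift_tmul, Algebra.TensorProduct.lift_tmul,
        TrivSqZeroExt.inlAlgHom_apply, TrivSqZeroExt.inlAlgHom_apply, TrivSqZeroExt.inl_one,
        one_mul, psi2_eps,
        TrivSqZeroExt.inl_mul_inr, ← TrivSqZeroExt.inr_smul, ← TrivSqZeroExt.inr_smul,
        ← TrivSqZeroExt.inr_add]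
      congr 1
      apply LinearMap.ext
      intro x
      simp only [LinearMap.add_apply, LinearMap.smul_apply, smul_eq_mul,
        Module.Dual.leftAlgebraSMul_apply, epsStar_apply, dn_mul_eps, TrivSqZeroExt.snd_smul,
        DualNumber.snd_eps, smul_eq_mul, mul_one]
      rw [dn_dual_apply f x]
      ring
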